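/- (Theorem 1(i)) For every integer g ≥ 1, the spectral radius of the g-th-order non-backtracking matrix of G is at most that of the (g−1)-th-order one: ρ(B^(g)) ≤ ρ(B^(g−1)). -/

import Mathlib

open Matrix ENNReal

namespace PercNB

variable {V : Type*} [Fintype V] [DecidableEq V]

/-- `p : Fin (g+1) → V` is a length-`g` directed path in the simple graph `G`:
`g+1` pairwise distinct vertices with consecutive vertices adjacent. -/
def IsDiPath (G : SimpleGraph V) (g : ℕ) (p : Fin (g+1) → V) : Prop :=
  Function.Injective p ∧ ∀ k : Fin g, G.Adj (p k.castSucc) (p k.succ)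

instance (G : SimpleGraph V) [DecidableRel G.Adj] (g : ℕ) :
    DecidablePred (IsDiPath G g) := fun p =>
  inferInstanceAs (Decidable (Function.Injective p ∧ ∀ k : Fin g, G.Adj (p k.castSucc) (p k.succ)))

/-- The type of length-`g` directed paths of `G`. -/
abbrev DiPath (G : SimpleGraph V) (g : ℕ) := {p : Fin (g+1) → V // IsDiPath G g p}

/-- The `g`-th-order non-backtracking matrix `B^(g)` of `G`, indexed by the length-`g`
directed paths of `G`: the `(p, q)` entry is `1` if `q k = p (k+1)` for `1 ≤ k ≤ g` and
`(p 1, …, p (g+1), q (g+1))` is a length-`(g+1)` directed path, and `0` otherwise. -/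
def NBM (G : SimpleGraph V) [DecidableRel G.Adj] (g : ℕ) :
    Matrix (DiPath G g) (DiPath G g) ℂ := fun p q =>
  if (∀ k : Fin g, q.1 k.castSucc = p.1 k.succ) ∧
      IsDiPath G (g+1) (Fin.snoc p.1 (q.1 (Fin.last g))) then 1 else 0

/-- The spectral radius of a finite square complex matrix:
the maximum modulus of its eigenvalues (`0` if the index type is empty). -/
noncomputable def specRad {n : Type*} [Fintype n] [DecidableEq n] (X : Matrix n n ℂ) : ℝ≥0∞ :=
  spectralRadius ℂ X

/-- `c : Fin k → V` is a simple cycle of length `k ≥ 3` in `G`: pairwise distinct vertices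
with `c t` adjacent to `c (t+1)` for `1 ≤ t ≤ k-1` and `c k` adjacent to `c 1`. -/
def IsSimpleCycle (G : SimpleGraph V) (k : ℕ) (c : Fin k → V) : Prop :=
  3 ≤ k ∧ Function.Injective c ∧
    ∀ t : Fin k, G.Adj (c t) (c ⟨(t.val + 1) % k, Nat.mod_lt _ t.pos⟩)

/-- The arc relation of the digraph `G^(g)` on the length-`g` directed paths of `G`:
`p → q` exactly when `B^(g)_{p,q} = 1`. -/
def NBArc (G : SimpleGraph V) (g : ℕ) (p q : DiPath G g) : Prop :=
  (∀ k : Fin g, q.1 k.castSucc = p.1 k.succ) ∧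
    IsDiPath G (g+1) (Fin.snoc p.1 (q.1 (Fin.last g)))

/-- The arc relation of the line digraph `L(G^(g-1))` (for `g ≥ 1`), under the identification
of its vertices — the arcs `(i₁,…,i_g) → (i₂,…,i_{g+1})` of `G^(g-1)` — with the length-`g`
directed paths `(i₁,…,i_{g+1})` of `G`: there is an arc `p → q` exactly when the arc
corresponding to `p` ends at the tail of the arc corresponding to `q`, i.e. when
`q k = p (k+1)` for `1 ≤ k ≤ g`. -/
def LineArc (G : SimpleGraph V) (g : ℕ) (p q : DiPath G g) : Prop :=
  ∀ k : Fin g, q.1 k.castSucc = p.1 k.succ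

/-- `c : Fin k → α` is a directed cycle of length `k` with respect to the arc relation `r`:
`k` pairwise distinct vertices with an arc from each to the cyclically next one. -/
def IsDiCycle {α : Type*} (r : α → α → Prop) (k : ℕ) (c : Fin k → α) : Prop :=
  Function.Injective c ∧ ∀ t : Fin k, r (c t) (c ⟨(t.val + 1) % k, Nat.mod_lt _ t.pos⟩)

/-- The type of directed edges of `G`: ordered pairs of adjacent vertices. -/
abbrev DiEdge (G : SimpleGraph V) := {e : V × V // G.Adj e.1 e.2}

/-- The standard non-backtracking matrix `B = B^(1)`, indexed by directed edges:
`B_{(i,j),(k,l)} = 1` iff `j = k`, `l ≠ i` and `j` is adjacent to `l`. -/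
def Bmat (G : SimpleGraph V) [DecidableRel G.Adj] : Matrix (DiEdge G) (DiEdge G) ℂ :=
  fun e f => if e.1.2 = f.1.1 ∧ f.1.2 ≠ e.1.1 ∧ G.Adj e.1.2 f.1.2 then 1 else 0

/-- `(ΔB₁)_{(i,j),(k,l)} = 1` iff `B_{(i,j),(k,l)} = 1` and `i` is adjacent to `l`. -/
def dB1 (G : SimpleGraph V) [DecidableRel G.Adj] : Matrix (DiEdge G) (DiEdge G) ℂ :=
  fun e f => if (e.1.2 = f.1.1 ∧ f.1.2 ≠ e.1.1 ∧ G.Adj e.1.2 f.1.2) ∧ G.Adj e.1.1 f.1.2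
    then 1 else 0

/-- `(ΔB₂)_{(i,j),(k,l)} = 1` iff `l = i` and `j` is adjacent to `k`. -/
def dB2 (G : SimpleGraph V) [DecidableRel G.Adj] : Matrix (DiEdge G) (DiEdge G) ℂ :=
  fun e f => if f.1.2 = e.1.1 ∧ G.Adj e.1.2 f.1.1 then 1 else 0

/-- The diagonal matrix `D_Δ` whose `((i,j),(i,j))` entry is the number of common
neighbours of `i` and `j`. -/
noncomputable def Ddel (G : SimpleGraph V) [DecidableRel G.Adj] :
    Matrix (DiEdge G) (DiEdge G) ℂ :=
  Matrix.diagonal fun e =>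
    ((Finset.univ.filter fun v => G.Adj e.1.1 v ∧ G.Adj e.1.2 v).card : ℂ)

/-- The `8E × 8E` block matrix
`M = [[B, −ΔB₂, D_Δ − I, B − ΔB₁], [I, 0, 0, 0], [0, I, 0, 0], [0, 0, I, 0]]`. -/
noncomputable def Mmat (G : SimpleGraph V) [DecidableRel G.Adj] :
    Matrix ((DiEdge G ⊕ DiEdge G) ⊕ (DiEdge G ⊕ DiEdge G))
      ((DiEdge G ⊕ DiEdge G) ⊕ (DiEdge G ⊕ DiEdge G)) ℂ :=
  Matrix.fromBlocks
    (Matrix.fromBlocks (Bmat G) (-(dB2 G)) 1 0)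
    (Matrix.fromBlocks (Ddel G - 1) (Bmat G - dB1 G) 0 0)
    (Matrix.fromBlocks 0 1 0 0)
    (Matrix.fromBlocks 0 0 1 0)

/-- `x_{(i,j)} = Σ_k ψ_{(i,j,k)}`, the sum over all vertices `k` adjacent to `j` with
`k ≠ i`; equivalently, the sum of `ψ` over all length-2 directed paths starting `(i,j,·)`. -/
noncomputable def xvec (G : SimpleGraph V) [DecidableRel G.Adj] (ψ : DiPath G 2 → ℂ) :
    DiEdge G → ℂ := fun e =>
  ∑ p ∈ Finset.univ.filter (fun p : DiPath G 2 => p.1 0 = e.1.1 ∧ p.1 1 = e.1.2), ψ p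

/-- `y_{(i,j)} = Σ_k ψ_{(i,j,k)}`, the sum over all vertices `k` adjacent to both `i`
and `j`. -/
noncomputable def yvec (G : SimpleGraph V) [DecidableRel G.Adj] (ψ : DiPath G 2 → ℂ) :
    DiEdge G → ℂ := fun e =>
  ∑ p ∈ Finset.univ.filter
    (fun p : DiPath G 2 => p.1 0 = e.1.1 ∧ p.1 1 = e.1.2 ∧ G.Adj e.1.1 (p.1 2)), ψ p

/-- The block vector `z = (x, λ⁻¹x, λ⁻²x, λ⁻³x)`. -/
noncomputable def blockVec {G : SimpleGraph V} (lam : ℂ) (x : DiEdge G → ℂ) :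
    (DiEdge G ⊕ DiEdge G) ⊕ (DiEdge G ⊕ DiEdge G) → ℂ :=
  Sum.elim (Sum.elim x (lam⁻¹ • x)) (Sum.elim ((lam ^ 2)⁻¹ • x) ((lam ^ 3)⁻¹ • x))

/-- The vector `ψ` built from `x`:
`ψ_{(i,j,k)} = (λ²x_{(j,k)} − λx_{(k,i)} + x_{(i,j)})/(λ³+1)` if `i` and `k` are adjacent,
and `ψ_{(i,j,k)} = λ⁻¹ x_{(j,k)}` if `i` and `k` are not adjacent. -/
noncomputable def psiOf (G : SimpleGraph V) [DecidableRel G.Adj] (lam : ℂ)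
    (x : DiEdge G → ℂ) : DiPath G 2 → ℂ := fun p =>
  if h : G.Adj (p.1 0) (p.1 2) then
    (lam ^ 2 * x ⟨(p.1 1, p.1 2), by simpa using p.2.2 1⟩
      - lam * x ⟨(p.1 2, p.1 0), h.symm⟩
      + x ⟨(p.1 0, p.1 1), by simpa using p.2.2 0⟩) / (lam ^ 3 + 1)
  else lam⁻¹ * x ⟨(p.1 1, p.1 2), by simpa using p.2.2 1⟩


section AuxSpec

open Filter
open scoped NNReal

attribute [local instance] Matrix.linftyOpNormedAddCommGroup Matrix.linftyOpNormedRing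
  Matrix.linftyOpNormedAlgebra

/-- The coercion `ℝ≥0 → ℂ` as a ring homomorphism. -/
noncomputable def nnphi : ℝ≥0 →+* ℂ := Complex.ofRealHom.comp NNReal.toRealHom

@[simp] lemma nnnorm_nnphi (x : ℝ≥0) : ‖nnphi x‖₊ = x := by
  simp [nnphi]

lemma powEntry_le {n : Type*} [Fintype n] [DecidableEq n]
    (a b : Matrix n n ℝ≥0) (hab : ∀ i j, a i j ≤ b i j) :
    ∀ (k : ℕ) (i j : n), (a ^ k) i j ≤ (b ^ k) i j := by
  intro k
  induction k with
  | zero => intro i j; rw [pow_zero, pow_zero]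
  | succ k ih =>
    intro i j
    rw [pow_succ, pow_succ]
    simp only [Matrix.mul_apply]
    exact Finset.sum_le_sum fun l _ => mul_le_mul' (ih i l) (hab l j)

lemma specRad_map_le {n : Type*} [Fintype n] [DecidableEq n]
    (a b : Matrix n n ℝ≥0) (hab : ∀ i j, a i j ≤ b i j) :
    spectralRadius ℂ (a.map nnphi) ≤ spectralRadius ℂ (b.map nnphi) := by
  have hmap : ∀ (c : Matrix n n ℝ≥0) (k : ℕ), (c.map nnphi) ^ k = (c ^ k).map nnphi := by
    intro c k
    simpa [RingHom.mapMatrix_apply] using (map_pow (RingHom.mapMatrix (m := n) nnphi) c k).symm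
  have hnorm : ∀ k : ℕ, (‖(a.map nnphi) ^ k‖₊ : ℝ≥0∞) ≤ (‖(b.map nnphi) ^ k‖₊ : ℝ≥0∞) := by
    intro k
    rw [hmap a k, hmap b k]
    refine ENNReal.coe_le_coe.mpr ?_
    rw [Matrix.linfty_opNNNorm_def, Matrix.linfty_opNNNorm_def]
    refine Finset.sup_mono_fun fun i _ => Finset.sum_le_sum fun j _ => ?_
    simp only [Matrix.map_apply, nnnorm_nnphi]
    exact powEntry_le a b hab k i j
  calc spectralRadius ℂ (a.map nnphi)
      ≤ atTop.liminf fun k : ℕ => (‖(a.map nnphi) ^ k‖₊ : ℝ≥0∞) ^ (1 / k : ℝ) :=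
        spectrum.spectralRadius_le_liminf_pow_nnnorm_pow_one_div ℂ _
    _ ≤ atTop.liminf fun k : ℕ => (‖(b.map nnphi) ^ k‖₊ : ℝ≥0∞) ^ (1 / k : ℝ) := by
        refine liminf_le_liminf (Eventually.of_forall fun k => ?_)
        exact ENNReal.rpow_le_rpow (hnorm k) (by positivity)
    _ = spectralRadius ℂ (b.map nnphi) :=
        (spectrum.pow_nnnorm_pow_one_div_tendsto_nhds_spectralRadius _).liminf_eq

lemma specRad_mul_comm_le {n m' : Type*} [Fintype n] [DecidableEq n]
    [Fintype m'] [DecidableEq m']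
    (S : Matrix m' n ℂ) (T : Matrix n m' ℂ) :
    spectralRadius ℂ (T * S) ≤ spectralRadius ℂ (S * T) := by
  rw [spectralRadius, spectralRadius]
  refine iSup₂_le fun lam hlam => ?_
  rcases eq_or_ne lam 0 with rfl | hne
  · simp
  have hmem : lam ∈ spectrum ℂ (S * T) := by
    rw [spectrum.mem_iff] at hlam ⊢
    have hdet : (algebraMap ℂ (Matrix n n ℂ) lam - T * S).det = 0 := by
      by_contra h
      exact hlam ((Matrix.isUnit_iff_isUnit_det _).mpr (isUnit_iff_ne_zero.mpr h))
    obtain ⟨v, hv0, hv⟩ := (Matrix.exists_mulVec_eq_zero_iff).mpr hdet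
    have hAlg : ∀ u : n → ℂ, (algebraMap ℂ (Matrix n n ℂ)) lam *ᵥ u = lam • u := fun u => by
      rw [Algebra.algebraMap_eq_smul_one, Matrix.smul_mulVec, Matrix.one_mulVec]
    have hAlg' : ∀ u : m' → ℂ, (algebraMap ℂ (Matrix m' m' ℂ)) lam *ᵥ u = lam • u := fun u => by
      rw [Algebra.algebraMap_eq_smul_one, Matrix.smul_mulVec, Matrix.one_mulVec]
    have hv' : (T * S).mulVec v = lam • v := by
      have h2 := hv
      rw [Matrix.sub_mulVec, sub_eq_zero, hAlg] at h2
      exact h2.symm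
    set w := S.mulVec v with hw
    have hw0 : w ≠ 0 := by
      intro h0
      have h3 : (T * S).mulVec v = 0 := by
        rw [← Matrix.mulVec_mulVec, ← hw, h0, Matrix.mulVec_zero]
      rw [hv'] at h3
      exact hv0 ((smul_eq_zero.mp h3).resolve_left hne)
    have hSTw : (S * T).mulVec w = lam • w := by
      rw [hw, Matrix.mulVec_mulVec, Matrix.mul_assoc, ← Matrix.mulVec_mulVec, hv',
        Matrix.mulVec_smul]
    intro hunit
    have hdet2 : (algebraMap ℂ (Matrix m' m' ℂ) lam - S * T).det ≠ 0 :=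
      ((Matrix.isUnit_iff_isUnit_det _).mp hunit).ne_zero
    apply hdet2
    refine (Matrix.exists_mulVec_eq_zero_iff).mp ⟨w, hw0, ?_⟩
    rw [Matrix.sub_mulVec, hAlg', hSTw, sub_self]
  exact le_iSup₂ (f := fun k (_ : k ∈ spectrum ℂ (S * T)) => (‖k‖₊ : ℝ≥0∞)) lam hmem

end AuxSpec

section AuxComb

/-- The initial part of a path: drop the last vertex. -/
def pInit {G : SimpleGraph V} {m : ℕ} (p : DiPath G (m+1)) : DiPath G m :=
  ⟨fun k => p.1 k.castSucc,
   fun k l h => Fin.castSucc_injective _ (p.2.1 h),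
   fun k => by
     have h := p.2.2 k.castSucc
     rwa [Fin.succ_castSucc] at h⟩

/-- The tail of a path: drop the first vertex. -/
def pTail {G : SimpleGraph V} {m : ℕ} (p : DiPath G (m+1)) : DiPath G m :=
  ⟨fun k => p.1 k.succ,
   fun k l h => Fin.succ_injective _ (p.2.1 h),
   fun k => by
     have h := p.2.2 k.succ
     rwa [← Fin.succ_castSucc] at h⟩

lemma eq_snoc {G : SimpleGraph V} {m : ℕ} (p : DiPath G (m+1)) {a b : DiPath G m}
    (ha : pInit p = a) (hb : pTail p = b) :
    p.1 = Fin.snoc a.1 (b.1 (Fin.last m)) := by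
  subst ha; subst hb
  funext k
  refine Fin.lastCases ?_ (fun j => ?_) k
  · rw [Fin.snoc_last]
    show p.1 (Fin.last (m+1)) = p.1 (Fin.last m).succ
    rw [Fin.succ_last]
  · rw [Fin.snoc_castSucc]
    rfl

lemma cond_of {G : SimpleGraph V} {m : ℕ} (p : DiPath G (m+1)) {a b : DiPath G m}
    (ha : pInit p = a) (hb : pTail p = b) :
    (∀ k : Fin m, b.1 k.castSucc = a.1 k.succ) ∧
      IsDiPath G (m+1) (Fin.snoc a.1 (b.1 (Fin.last m))) := by
  constructor
  · intro k
    subst ha; subst hb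
    show p.1 k.castSucc.succ = p.1 k.succ.castSucc
    rw [Fin.succ_castSucc]
  · rw [← eq_snoc p ha hb]
    exact p.2

lemma init_tail_of_cond {G : SimpleGraph V} {m : ℕ} {a b : DiPath G m}
    (hc : (∀ k : Fin m, b.1 k.castSucc = a.1 k.succ) ∧
      IsDiPath G (m+1) (Fin.snoc a.1 (b.1 (Fin.last m)))) :
    pInit (⟨Fin.snoc a.1 (b.1 (Fin.last m)), hc.2⟩ : DiPath G (m+1)) = a ∧
      pTail (⟨Fin.snoc a.1 (b.1 (Fin.last m)), hc.2⟩ : DiPath G (m+1)) = b := by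
  constructor
  · refine Subtype.ext (funext fun k => ?_)
    simp only [pInit, Fin.snoc_castSucc]
  · refine Subtype.ext (funext fun k => ?_)
    simp only [pTail]
    refine Fin.lastCases ?_ (fun j => ?_) k
    · rw [Fin.succ_last, Fin.snoc_last]
    · rw [Fin.succ_castSucc, Fin.snoc_castSucc, hc.1 j]

end AuxComb

/-- **Theorem 1(i).** For every `g ≥ 1`, `ρ(B^(g)) ≤ ρ(B^(g-1))`. -/
theorem nbm_specRad_le (G : SimpleGraph V) [DecidableRel G.Adj] (g : ℕ) (hg : 1 ≤ g) :
    specRad (NBM G g) ≤ specRad (NBM G (g - 1)) := by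
  obtain ⟨m, rfl⟩ : ∃ m, g = m + 1 := ⟨g - 1, (Nat.succ_pred_eq_of_pos hg).symm⟩
  rw [Nat.add_sub_cancel]
  classical
  open scoped NNReal in
  set aN : Matrix (DiPath G (m+1)) (DiPath G (m+1)) ℝ≥0 := fun p q =>
    if (∀ k : Fin (m+1), q.1 k.castSucc = p.1 k.succ) ∧
        IsDiPath G (m+1+1) (Fin.snoc p.1 (q.1 (Fin.last (m+1)))) then 1 else 0 with haN
  set bN : Matrix (DiPath G (m+1)) (DiPath G (m+1)) ℝ≥0 := fun p q =>
    if ∀ k : Fin (m+1), q.1 k.castSucc = p.1 k.succ then 1 else 0 with hbN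
  set S : Matrix (DiPath G m) (DiPath G (m+1)) ℂ :=
    fun a p => if pInit p = a then 1 else 0 with hS
  set T : Matrix (DiPath G (m+1)) (DiPath G m) ℂ :=
    fun p b => if pTail p = b then 1 else 0 with hT
  have hA : NBM G (m+1) = aN.map nnphi := by
    funext p q
    rw [haN]
    simp only [NBM, Matrix.map_apply]
    split_ifs with h <;> simp [nnphi, Matrix.map, h]
  have hTS : bN.map nnphi = T * S := by
    funext p q
    rw [Matrix.map_apply, Matrix.mul_apply, hS, hT, hbN]
    simp only [ite_mul, one_mul, zero_mul]
    rw [Finset.sum_ite_eq Finset.univ (pTail p) (fun c => if pInit q = c then (1:ℂ) else 0)]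
    rw [if_pos (Finset.mem_univ _)]
    by_cases h : ∀ k : Fin (m+1), q.1 k.castSucc = p.1 k.succ
    · rw [if_pos h, _root_.map_one, if_pos (Subtype.ext (funext fun k => h k))]
    · rw [if_neg h, _root_.map_zero, if_neg]
      intro hq
      exact h fun k => congrFun (congrArg Subtype.val hq) k
  have hST : NBM G m = S * T := by
    funext a b
    rw [Matrix.mul_apply]
    simp only [hS, hT, ite_mul, one_mul, zero_mul, ← ite_and]
    by_cases hc : (∀ k : Fin m, b.1 k.castSucc = a.1 k.succ) ∧
        IsDiPath G (m+1) (Fin.snoc a.1 (b.1 (Fin.last m)))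
    · have hiff : ∀ p : DiPath G (m+1), (pInit p = a ∧ pTail p = b) ↔
          p = (⟨Fin.snoc a.1 (b.1 (Fin.last m)), hc.2⟩ : DiPath G (m+1)) := by
        intro p
        constructor
        · rintro ⟨h1, h2⟩
          exact Subtype.ext (eq_snoc p h1 h2)
        · rintro rfl
          exact init_tail_of_cond hc
      rw [Finset.sum_congr rfl fun p _ => if_congr (hiff p) rfl rfl,
        Finset.sum_ite_eq' Finset.univ _ (fun _ => (1:ℂ)), if_pos (Finset.mem_univ _)]
      simp only [NBM]
      rw [if_pos hc]
    · rw [Finset.sum_eq_zero fun p _ => if_neg fun hp => hc (cond_of p hp.1 hp.2)]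
      simp only [NBM]
      rw [if_neg hc]
  have hab : ∀ p q, aN p q ≤ bN p q := by
    intro p q
    rw [haN, hbN]
    dsimp only
    split_ifs with h1 h2 h2
    · exact le_rfl
    · exact absurd h1.1 h2
    · exact zero_le
    · exact le_rfl
  calc specRad (NBM G (m+1)) = spectralRadius ℂ (aN.map nnphi) := by rw [specRad, hA]
    _ ≤ spectralRadius ℂ (bN.map nnphi) := specRad_map_le aN bN hab
    _ = spectralRadius ℂ (T * S) := by rw [hTS]
    _ ≤ spectralRadius ℂ (S * T) := specRad_mul_comm_le S T
    _ = specRad (NBM G m) := by rw [specRad, hST]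


end PercNB
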